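/- Oracle property of GOAL, part 1 (consistency in variable selection). Let (X_i, A_i), i = 1, 2, …, be i.i.d. random pairs with X_i ∈ ℝ^p and A_i ∈ {0,1} such that P(A_i = 1 | X_i) = exp(X_iᵀα*)/(1 + exp(X_iᵀα*)) almost surely, where α* ∈ ℝ^p satisfies α*_j ≠ 0 for j ∈ 𝒜 := {1, …, p₀} and α*_j = 0 for j ∈ 𝒜ᶜ := {p₀+1, …, p}. Assume E‖X₁‖³ < ∞ and that the Fisher information matrix F(α*) = E[φ''(X₁ᵀα*) X₁X₁ᵀ] is positive definite. Let β̂⁽ⁿ⁾ ∈ ℝ^p be random vectors (functions of the first n observations) such that, for each j ∈ 𝒜, β̂⁽ⁿ⁾_j converges in probability to some β*_j ≠ 0, and, for each j ∈ 𝒜ᶜ, √n·β̂⁽ⁿ⁾_j is bounded in probability (i.e., for every ε > 0 there is M with limsup_n P(√n|β̂⁽ⁿ⁾_j| > M) ≤ ε, and P(β̂⁽ⁿ⁾_j = 0) → 0). Fix γ > 1 and set ŵ⁽ⁿ⁾_j = |β̂⁽ⁿ⁾_j|^{−γ}. Let λ_{1,n}, λ_{2,n} ≥ 0 satisfy λ_{1,n}/√n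 → 0, λ_{1,n} n^{γ/2−1} → ∞, and λ_{2,n}/√n → 0. Let α̂⁽ⁿ⁾ be any measurable choice of global minimizer over α ∈ ℝ^p of the GOAL objective ℓ_n(α) + λ_{1,n} Σ_{j=1}^p ŵ⁽ⁿ⁾_j |α_j| + λ_{2,n} Σ_{j=1}^p α_j². Then P(α̂⁽ⁿ⁾_j = 0 for all j ∈ 𝒜ᶜ) → 1 as n → ∞. -/

import Mathlib

open MeasureTheory ProbabilityTheory Filter
open scoped RealInnerProductSpace ENNReal

/-- The logistic log-partition function `φ(t) = log(1 + exp t)`. -/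
noncomputable def phi (t : ℝ) : ℝ := Real.log (1 + Real.exp t)

/-- `φ'(t) = exp t / (1 + exp t)` (the logistic function). -/
noncomputable def phiD1 (t : ℝ) : ℝ := Real.exp t / (1 + Real.exp t)

/-- `φ''(t) = exp t / (1 + exp t)^2`. -/
noncomputable def phiD2 (t : ℝ) : ℝ := Real.exp t / (1 + Real.exp t) ^ 2

/-- The GOAL objective
`ℓ_n(α) + λ₁ ∑_j ŵ_j |α_j| + λ₂ ∑_j α_j²` with adaptive weights `ŵ_j = |β̂_j|^{−γ}`,
where `ℓ_n` is the logistic negative log-likelihood of the first `n` observations. -/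
noncomputable def goalObjective {p : ℕ} (n : ℕ)
    (x : ℕ → EuclideanSpace ℝ (Fin p)) (a : ℕ → ℝ)
    (βhat : EuclideanSpace ℝ (Fin p)) (γ lam1 lam2 : ℝ)
    (α : EuclideanSpace ℝ (Fin p)) : ℝ :=
  (∑ i ∈ Finset.range n, (-(a i) * ⟪x i, α⟫ + phi ⟪x i, α⟫))
    + lam1 * ∑ j, |βhat j| ^ (-γ) * |α j|
    + lam2 * ∑ j, (α j) ^ 2


-- basic facts
lemma phi_pos_den (t : ℝ) : (0:ℝ) < 1 + Real.exp t := by positivity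

lemma hasDerivAt_phi (u : ℝ) : HasDerivAt phi (phiD1 u) u := by
  have h : HasDerivAt (fun t => 1 + Real.exp t) (Real.exp u) u :=
    (Real.hasDerivAt_exp u).const_add 1
  exact h.log (ne_of_gt (phi_pos_den u))

lemma phiD1_mem (u : ℝ) : 0 ≤ phiD1 u ∧ phiD1 u ≤ 1 := by
  constructor
  · exact div_nonneg (Real.exp_nonneg u) (le_of_lt (phi_pos_den u))
  · unfold phiD1; rw [div_le_one (phi_pos_den u)]; linarith [Real.exp_pos u]

lemma phi_nonneg (u : ℝ) : 0 ≤ phi u := by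
  unfold phi
  have : (1:ℝ) ≤ 1 + Real.exp u := by linarith [Real.exp_pos u]
  simpa using Real.log_nonneg this

lemma phi_ge (u : ℝ) : u ≤ phi u := by
  unfold phi
  calc u = Real.log (Real.exp u) := (Real.log_exp u).symm
  _ ≤ Real.log (1 + Real.exp u) :=
    Real.log_le_log (Real.exp_pos u) (by linarith)

lemma abs_coord_le_norm {p : ℕ} (x : EuclideanSpace ℝ (Fin p)) (j : Fin p) :
    |x j| ≤ ‖x‖ := by
  rw [EuclideanSpace.norm_eq]
  rw [← Real.sqrt_sq_eq_abs]
  apply Real.sqrt_le_sqrt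
  calc (x j)^2 = ‖x j‖^2 := by simp [Real.norm_eq_abs, sq_abs]
  _ ≤ ∑ k, ‖x k‖^2 :=
    Finset.single_le_sum (f := fun k => ‖x k‖^2) (fun k _ => by positivity) (Finset.mem_univ j)

lemma inner_update {p : ℕ} (x α : EuclideanSpace ℝ (Fin p)) (j : Fin p) (t : ℝ) :
    ⟪x, (WithLp.toLp 2 (Function.update α.ofLp j t) : EuclideanSpace ℝ (Fin p))⟫
      = (⟪x, α⟫ - x j * α j) + x j * t := by
  simp only [PiLp.inner_apply, RCLike.inner_apply, starRingEnd_apply, star_trivial, PiLp.toLp_apply]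
  have h1 : ∀ (β : EuclideanSpace ℝ (Fin p)), ∑ k, x k * β k
      = x j * β j + ∑ k ∈ Finset.univ.erase j, x k * β k := by
    intro β
    rw [← Finset.add_sum_erase _ _ (Finset.mem_univ j)]
  rw [Finset.sum_congr rfl (fun k _ => mul_comm (Function.update α.ofLp j t k) (x k)),
    Finset.sum_congr rfl (fun k _ => mul_comm (α k) (x k))]
  rw [h1 α, ← Finset.add_sum_erase _ _ (Finset.mem_univ j)]
  have h2 : ∑ k ∈ Finset.univ.erase j, x k * (Function.update α.ofLp j t) k
      = ∑ k ∈ Finset.univ.erase j, x k * α k := by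
    apply Finset.sum_congr rfl
    intro k hk
    rw [Function.update_apply]
    simp [Finset.ne_of_mem_erase hk]
  rw [h2]
  simp [Function.update_apply]
  ring

lemma update_sum_abs {p : ℕ} (w α : Fin p → ℝ) (j : Fin p) (t : ℝ) :
    ∑ k, w k * |Function.update α j t k|
      = (∑ k ∈ Finset.univ.erase j, w k * |α k|) + w j * |t| := by
  rw [← Finset.add_sum_erase _ (fun k => w k * |Function.update α j t k|) (Finset.mem_univ j)]
  rw [Function.update_self]
  rw [add_comm]
  congr 1
  apply Finset.sum_congr rfl
  intro k hk
  rw [Function.update_apply]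
  simp [Finset.ne_of_mem_erase hk]

lemma update_sum_sq {p : ℕ} (α : Fin p → ℝ) (j : Fin p) (t : ℝ) :
    ∑ k, (Function.update α j t k)^2
      = (∑ k ∈ Finset.univ.erase j, (α k)^2) + t^2 := by
  rw [← Finset.add_sum_erase _ (fun k => (Function.update α j t k)^2) (Finset.mem_univ j)]
  rw [Function.update_self]
  rw [add_comm]
  congr 1
  apply Finset.sum_congr rfl
  intro k hk
  rw [Function.update_apply]
  simp [Finset.ne_of_mem_erase hk]

/-- First-order condition at a nonzero coordinate of a global minimizer. -/
lemma foc {p : ℕ} (n : ℕ) (x : ℕ → EuclideanSpace ℝ (Fin p)) (a : ℕ → ℝ)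
    (ha : ∀ i, a i = 0 ∨ a i = 1)
    (b : EuclideanSpace ℝ (Fin p)) (γ lam1 lam2 : ℝ)
    (h1 : 0 ≤ lam1) (h2 : 0 ≤ lam2)
    (α : EuclideanSpace ℝ (Fin p))
    (hmin : ∀ α', goalObjective n x a b γ lam1 lam2 α ≤ goalObjective n x a b γ lam1 lam2 α')
    (j : Fin p) (hj : α j ≠ 0) :
    lam1 * |b j| ^ (-γ) ≤ (∑ i ∈ Finset.range n, ‖x i‖) + 2 * lam2 * |α j| := by
  set w : Fin p → ℝ := fun k => |b k| ^ (-γ) with hw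
  set s : ℝ := if 0 < α j then 1 else -1 with hsdef
  have hs1 : |s| = 1 := by
    rw [hsdef]; split <;> simp
  have habs : ∀ t : ℝ, |t - α j| < |α j| → |t| = s * t := by
    intro t ht
    rw [hsdef]
    rcases lt_trichotomy (α j) 0 with h | h | h
    · rw [if_neg (by linarith), abs_of_nonpos]
      · ring
      · rw [abs_of_neg h] at ht
        cases abs_lt.1 ht; linarith
    · exact absurd h hj
    · rw [if_pos h, abs_of_nonneg]
      · ring
      · rw [abs_of_pos h] at ht
        cases abs_lt.1 ht; linarith
  set c : ℕ → ℝ := fun i => ⟪x i, α⟫ - x i j * α j with hc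
  set G : ℝ → ℝ := fun t =>
    (∑ i ∈ Finset.range n, (-(a i) * (c i + x i j * t) + phi (c i + x i j * t)))
    + lam1 * ((∑ k ∈ Finset.univ.erase j, w k * |α k|) + w j * (s * t))
    + lam2 * ((∑ k ∈ Finset.univ.erase j, (α k)^2) + t^2) with hG
  have key1 : ∀ t : ℝ, |t - α j| < |α j| →
      G t = goalObjective n x a b γ lam1 lam2 (WithLp.toLp 2 (Function.update α.ofLp j t)) := by
    intro t ht
    rw [hG]
    simp only [goalObjective, PiLp.toLp_apply]
    rw [update_sum_abs, update_sum_sq, habs t ht]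
    congr 1
    congr 1
    apply Finset.sum_congr rfl
    intro i _
    rw [inner_update]
  have hGmin : IsLocalMin G (α j) := by
    have hball : ∀ᶠ t in nhds (α j), |t - α j| < |α j| := by
      have := Metric.ball_mem_nhds (α j) (abs_pos.2 hj)
      filter_upwards [this] with t ht
      simpa [Real.dist_eq] using ht
    filter_upwards [hball] with t ht
    have e0 : |α j - α j| < |α j| := by simpa using abs_pos.2 hj
    rw [key1 t ht, key1 (α j) e0, Function.update_eq_self, WithLp.toLp_ofLp]
    exact hmin _
  -- derivative of G at α j
  set D : ℝ := (∑ i ∈ Finset.range n,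
      (-(a i) * x i j + phiD1 (c i + x i j * α j) * x i j))
      + lam1 * (w j * s) + lam2 * (2 * α j) with hD
  have hderiv : HasDerivAt G D (α j) := by
    rw [hG, hD]
    apply HasDerivAt.add
    apply HasDerivAt.add
    · apply HasDerivAt.fun_sum
      intro i _
      have hlin : HasDerivAt (fun t : ℝ => c i + x i j * t) (x i j) (α j) := by
        simpa using ((hasDerivAt_id (α j)).const_mul (x i j)).const_add (c i)
      exact ((hlin.const_mul (-(a i))).add ((hasDerivAt_phi _).comp _ hlin)).congr_deriv
        (by ring)
    · have : HasDerivAt (fun t : ℝ => (∑ k ∈ Finset.univ.erase j, w k * |α k|) + w j * (s * t))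
          (w j * s) (α j) := by
        simpa [mul_assoc] using
          (((hasDerivAt_id (α j)).const_mul (w j * s)).const_add
            (∑ k ∈ Finset.univ.erase j, w k * |α k|))
      exact this.const_mul lam1
    · have : HasDerivAt (fun t : ℝ => (∑ k ∈ Finset.univ.erase j, (α k)^2) + t^2)
          (2 * α j) (α j) := by
        simpa using ((hasDerivAt_pow 2 (α j)).const_add (∑ k ∈ Finset.univ.erase j, (α k)^2))
      exact this.const_mul lam2
  have hD0 : D = 0 := hGmin.hasDerivAt_eq_zero hderiv
  -- now bound
  have key2 : lam1 * w j = |lam1 * (w j * s)| := by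
    rw [abs_mul, abs_mul, hs1, abs_of_nonneg h1, abs_of_nonneg (Real.rpow_nonneg (abs_nonneg _) _)]
    ring
  have hsum : |(∑ i ∈ Finset.range n,
      (-(a i) * x i j + phiD1 (c i + x i j * α j) * x i j))|
      ≤ ∑ i ∈ Finset.range n, ‖x i‖ := by
    refine (Finset.abs_sum_le_sum_abs _ _).trans (Finset.sum_le_sum ?_)
    intro i _
    have h01 := phiD1_mem (c i + x i j * α j)
    have hfac : |(phiD1 (c i + x i j * α j) - a i)| ≤ 1 := by
      rcases ha i with h' | h' <;> rw [h', abs_le] <;> constructor <;> linarith [h01.1, h01.2]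
    calc |(-(a i) * x i j + phiD1 (c i + x i j * α j) * x i j)|
        = |(phiD1 (c i + x i j * α j) - a i)| * |x i j| := by
          rw [← abs_mul]; congr 1; ring
      _ ≤ 1 * ‖x i‖ := by
          apply mul_le_mul hfac (abs_coord_le_norm _ _) (abs_nonneg _) zero_le_one
      _ = ‖x i‖ := one_mul _
  have : lam1 * (w j * s) = -((∑ i ∈ Finset.range n,
      (-(a i) * x i j + phiD1 (c i + x i j * α j) * x i j)) + lam2 * (2 * α j)) := by
    rw [hD] at hD0; linarith
  rw [key2, this]
  calc |(-((∑ i ∈ Finset.range n,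
      (-(a i) * x i j + phiD1 (c i + x i j * α j) * x i j)) + lam2 * (2 * α j)))|
      ≤ |(∑ i ∈ Finset.range n,
        (-(a i) * x i j + phiD1 (c i + x i j * α j) * x i j))| + |lam2 * (2 * α j)| := by
        rw [abs_neg]; exact abs_add_le _ _
    _ ≤ (∑ i ∈ Finset.range n, ‖x i‖) + 2 * lam2 * |α j| := by
        apply add_le_add hsum
        rw [abs_mul, abs_mul, abs_of_nonneg h2]
        simp [abs_of_nonneg, mul_comm, mul_assoc, mul_left_comm]

/-- The penalty at the minimizer is at most the objective at zero, `n log 2`. -/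
lemma objBound {p : ℕ} (n : ℕ) (x : ℕ → EuclideanSpace ℝ (Fin p)) (a : ℕ → ℝ)
    (ha : ∀ i, a i = 0 ∨ a i = 1)
    (b : EuclideanSpace ℝ (Fin p)) (γ lam1 lam2 : ℝ)
    (h1 : 0 ≤ lam1) (h2 : 0 ≤ lam2)
    (α : EuclideanSpace ℝ (Fin p))
    (hmin : ∀ α', goalObjective n x a b γ lam1 lam2 α ≤ goalObjective n x a b γ lam1 lam2 α')
    (j : Fin p) :
    lam1 * (|b j| ^ (-γ) * |α j|) ≤ n * Real.log 2 := by
  have hzero : goalObjective n x a b γ lam1 lam2 0 = n * Real.log 2 := by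
    simp [goalObjective, phi]
    left; norm_num
  have hterm : ∀ i, 0 ≤ -(a i) * ⟪x i, α⟫ + phi ⟪x i, α⟫ := by
    intro i
    rcases ha i with h' | h' <;> rw [h']
    · simpa using phi_nonneg _
    · have := phi_ge ⟪x i, α⟫; linarith
  have hpen : lam1 * (|b j| ^ (-γ) * |α j|) ≤ goalObjective n x a b γ lam1 lam2 α := by
    unfold goalObjective
    have t1 : 0 ≤ ∑ i ∈ Finset.range n, (-(a i) * ⟪x i, α⟫ + phi ⟪x i, α⟫) :=
      Finset.sum_nonneg fun i _ => hterm i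
    have t2 : |b j| ^ (-γ) * |α j| ≤ ∑ k, |b k| ^ (-γ) * |α k| :=
      Finset.single_le_sum (f := fun k => |b k| ^ (-γ) * |α k|)
        (fun k _ => mul_nonneg (Real.rpow_nonneg (abs_nonneg _) _) (abs_nonneg _))
        (Finset.mem_univ j)
    have t3 : (0:ℝ) ≤ ∑ k, (α k)^2 := Finset.sum_nonneg fun k _ => sq_nonneg _
    nlinarith [mul_le_mul_of_nonneg_left t2 h1, mul_nonneg h2 t3]
  calc lam1 * (|b j| ^ (-γ) * |α j|) ≤ goalObjective n x a b γ lam1 lam2 α := hpen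
    _ ≤ goalObjective n x a b γ lam1 lam2 0 := hmin 0
    _ = n * Real.log 2 := hzero

/-- Deterministic lemma: on the good event, every inactive coordinate of the
minimizer vanishes. -/
lemma detSelect {p : ℕ} (n : ℕ) (hn : 1 ≤ n)
    (x : ℕ → EuclideanSpace ℝ (Fin p)) (a : ℕ → ℝ)
    (ha : ∀ i, a i = 0 ∨ a i = 1)
    (b : EuclideanSpace ℝ (Fin p)) (γ lam1 lam2 : ℝ) (hγ : 0 < γ)
    (h1 : 0 ≤ lam1) (h2 : 0 ≤ lam2)
    (α : EuclideanSpace ℝ (Fin p))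
    (hmin : ∀ α', goalObjective n x a b γ lam1 lam2 α ≤ goalObjective n x a b γ lam1 lam2 α')
    (C M : ℝ) (hC : 0 ≤ C) (hM : 0 < M)
    (hS : ∑ i ∈ Finset.range n, ‖x i‖ ≤ C * n)
    (hlam2n : lam2 ≤ Real.sqrt n)
    (hlam1n : (C + 2) * M ^ γ < lam1 * (n : ℝ) ^ (γ / 2 - 1))
    (j : Fin p) (hbj : b j ≠ 0) (hbM : Real.sqrt n * |b j| ≤ M) :
    α j = 0 := by
  by_contra hj
  have hn0 : (0:ℝ) < n := by exact_mod_cast hn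
  have hsq : (0:ℝ) < Real.sqrt n := Real.sqrt_pos.2 hn0
  set W : ℝ := |b j| ^ (-γ) with hWdef
  -- lower bound on W
  have hbpos : 0 < |b j| := abs_pos.2 hbj
  have hble : |b j| ≤ M / Real.sqrt n := by
    rw [le_div_iff₀ hsq]; linarith [hbM]
  have hW : (n:ℝ) ^ (γ/2) / M ^ γ ≤ W := by
    have e1 : |b j| ^ γ ≤ (M / Real.sqrt n) ^ γ :=
      Real.rpow_le_rpow (le_of_lt hbpos) hble (le_of_lt hγ)
    have e2 : ((M / Real.sqrt n) ^ γ)⁻¹ ≤ (|b j| ^ γ)⁻¹ :=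
      inv_anti₀ (Real.rpow_pos_of_pos hbpos γ) e1
    have e3 : W = (|b j| ^ γ)⁻¹ := by
      rw [hWdef, Real.rpow_neg (abs_nonneg _)]
    have e4 : ((M / Real.sqrt n) ^ γ)⁻¹ = (n:ℝ) ^ (γ/2) / M ^ γ := by
      rw [← Real.inv_rpow (by positivity), inv_div]
      rw [Real.div_rpow (le_of_lt hsq) (le_of_lt hM)]
      congr 1
      rw [Real.sqrt_eq_rpow, ← Real.rpow_mul (le_of_lt hn0)]
      ring_nf
    rw [e3, ← e4]; exact e2
  set L : ℝ := lam1 * W with hLdef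
  have hfoc := foc n x a ha b γ lam1 lam2 h1 h2 α hmin j hj
  have hob := objBound n x a ha b γ lam1 lam2 h1 h2 α hmin j
  have hMγ : (0:ℝ) < M ^ γ := Real.rpow_pos_of_pos hM γ
  have hL : (C + 2) * n < L := by
    have e5 : (n:ℝ) ^ (γ/2) = (n:ℝ) ^ (γ/2 - 1) * n := by
      have h := Real.rpow_add hn0 (γ/2-1) 1
      rw [Real.rpow_one] at h
      rw [← h]; norm_num
    have e6 : (C + 2) * M ^ γ * n < lam1 * (n:ℝ) ^ (γ/2 - 1) * n :=
      mul_lt_mul_of_pos_right hlam1n hn0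
    have e7 : lam1 * ((n:ℝ) ^ (γ/2) / M ^ γ) ≤ L :=
      mul_le_mul_of_nonneg_left hW h1
    rw [← mul_div_assoc, div_le_iff₀ hMγ] at e7
    rw [e5] at e7
    nlinarith
  have h1' : L ≤ C * n + 2 * lam2 * |α j| := by
    rw [hLdef]; linarith
  have h2' : L * |α j| ≤ n * Real.log 2 := by
    rw [hLdef, mul_assoc]; exact hob
  have hLpos : 0 < L := by nlinarith
  have hn1 : (1:ℝ) ≤ n := by exact_mod_cast hn
  have hs2 : Real.sqrt n ≤ n := by
    nlinarith [Real.sq_sqrt (le_of_lt hn0), Real.sqrt_nonneg (n:ℝ),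
      sq_nonneg (Real.sqrt n - 1)]
  have hlog : Real.log 2 ≤ 1 :=
    le_of_lt (lt_of_lt_of_le Real.log_two_lt_d9 (by norm_num))
  have hlog0 : 0 ≤ Real.log 2 := Real.log_nonneg one_le_two
  have hαj : 0 ≤ |α j| := abs_nonneg _
  nlinarith [mul_le_mul_of_nonneg_left h1' hLpos.le,
    mul_le_mul_of_nonneg_left h2' (by positivity : (0:ℝ) ≤ 2 * lam2),
    mul_lt_mul_of_pos_right hL hLpos,
    mul_le_mul_of_nonneg_right hlam2n (mul_nonneg (le_of_lt hn0) hlog0),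
    mul_le_mul_of_nonneg_left hs2 (le_of_lt hn0), hn1]

/-- Oracle property of GOAL, part 1: consistency in variable selection.
Under i.i.d. logistic sampling with true coefficient `α*` supported on the first
`p₀` coordinates, moment and Fisher-information conditions, suitable behavior of
the adaptive weights, and the tuning conditions `λ₁/√n → 0`, `λ₁ n^{γ/2−1} → ∞`,
`λ₂/√n → 0` with `γ > 1`, any measurable global minimizer `α̂⁽ⁿ⁾` of the GOAL
objective satisfies `P(α̂⁽ⁿ⁾_j = 0 for all j ∈ 𝒜ᶜ) → 1`. -/
theorem goal_oracle_variable_selection_consistency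
    {p p₀ : ℕ} (hp₀ : p₀ ≤ p)
    {Ω : Type*} [MeasureSpace Ω] [IsProbabilityMeasure (ℙ : Measure Ω)]
    (X : ℕ → Ω → EuclideanSpace ℝ (Fin p)) (A : ℕ → Ω → ℝ)
    (hXmeas : ∀ i, Measurable (X i)) (hAmeas : ∀ i, Measurable (A i))
    (hindep : iIndepFun (fun i ω => (X i ω, A i ω)) ℙ)
    (hident : ∀ i, Measure.map (fun ω => (X i ω, A i ω)) ℙ
      = Measure.map (fun ω => (X 0 ω, A 0 ω)) ℙ)
    (hA01 : ∀ i ω, A i ω = 0 ∨ A i ω = 1)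
    (αstar : EuclideanSpace ℝ (Fin p))
    (hcond : ∀ i, (MeasureTheory.condExp
        (MeasurableSpace.comap (X i) inferInstance) ℙ (A i))
      =ᵐ[ℙ] fun ω => phiD1 ⟪X i ω, αstar⟫)
    (hactive : ∀ j : Fin p, (j : ℕ) < p₀ → αstar j ≠ 0)
    (hinactive : ∀ j : Fin p, p₀ ≤ (j : ℕ) → αstar j = 0)
    (hmom : Integrable (fun ω => ‖X 0 ω‖ ^ 3) ℙ)
    (F : Matrix (Fin p) (Fin p) ℝ)
    (hF : ∀ j k, F j k = ∫ ω, phiD2 ⟪X 0 ω, αstar⟫ * X 0 ω j * X 0 ω k ∂ℙ)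
    (hFpos : F.PosDef)
    (βhat : ℕ → Ω → EuclideanSpace ℝ (Fin p))
    (hβmeas : ∀ n, Measurable (βhat n))
    (βstar : EuclideanSpace ℝ (Fin p))
    (hβstar : ∀ j : Fin p, (j : ℕ) < p₀ → βstar j ≠ 0)
    (hβcons : ∀ j : Fin p, (j : ℕ) < p₀ →
      TendstoInMeasure ℙ (fun n ω => βhat n ω j) atTop (fun _ => βstar j))
    (hβbound : ∀ j : Fin p, p₀ ≤ (j : ℕ) → ∀ ε : ℝ, 0 < ε → ∃ M : ℝ,
      limsup (fun n : ℕ => ℙ {ω | M < Real.sqrt n * |βhat n ω j|}) atTop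
        ≤ ENNReal.ofReal ε)
    (hβzero : ∀ j : Fin p, p₀ ≤ (j : ℕ) →
      Tendsto (fun n : ℕ => ℙ {ω | βhat n ω j = 0}) atTop (nhds 0))
    (γ : ℝ) (hγ : 1 < γ)
    (lam1 lam2 : ℕ → ℝ) (hlam1nn : ∀ n, 0 ≤ lam1 n) (hlam2nn : ∀ n, 0 ≤ lam2 n)
    (hlam1a : Tendsto (fun n : ℕ => lam1 n / Real.sqrt n) atTop (nhds 0))
    (hlam1b : Tendsto (fun n : ℕ => lam1 n * (n : ℝ) ^ (γ / 2 - 1)) atTop atTop)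
    (hlam2 : Tendsto (fun n : ℕ => lam2 n / Real.sqrt n) atTop (nhds 0))
    (αhat : ℕ → Ω → EuclideanSpace ℝ (Fin p))
    (hαmeas : ∀ n, Measurable (αhat n))
    (hαmin : ∀ n ω, ∀ α : EuclideanSpace ℝ (Fin p),
      goalObjective n (fun i => X i ω) (fun i => A i ω) (βhat n ω) γ
          (lam1 n) (lam2 n) (αhat n ω)
        ≤ goalObjective n (fun i => X i ω) (fun i => A i ω) (βhat n ω) γ
          (lam1 n) (lam2 n) α) :
    Tendsto
      (fun n : ℕ => ℙ {ω | ∀ j : Fin p, p₀ ≤ (j : ℕ) → αhat n ω j = 0})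
      atTop (nhds 1) := by
  classical
  set T : ℕ → Set Ω := fun n => {ω | ∀ j : Fin p, p₀ ≤ (j : ℕ) → αhat n ω j = 0} with hT
  have hTmeas : ∀ n, MeasurableSet (T n) := by
    intro n
    have heq : T n = ⋂ j : Fin p, {ω | p₀ ≤ (j : ℕ) → αhat n ω j = 0} := by
      ext ω; simp [hT, Set.mem_iInter]
    rw [heq]
    refine MeasurableSet.iInter fun j => ?_
    by_cases hj : p₀ ≤ (j : ℕ)
    · have h2 : {ω | p₀ ≤ (j : ℕ) → αhat n ω j = 0} = (fun ω => αhat n ω j) ⁻¹' {0} := by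
        ext ω; simp [hj]
      rw [h2]
      exact ((measurable_pi_apply j).comp ((WithLp.measurable_ofLp 2 _).comp (hαmeas n))) (measurableSet_singleton 0)
    · have h2 : {ω | p₀ ≤ (j : ℕ) → αhat n ω j = 0} = Set.univ := by
        ext ω; simp [hj]
      rw [h2]; exact MeasurableSet.univ
  -- LLN part
  set Y : ℕ → Ω → ℝ := fun i ω => ‖X i ω‖ with hY
  have hYmeas : ∀ i, Measurable (Y i) := fun i => (hXmeas i).norm
  have hYint : Integrable (Y 0) ℙ := by
    refine Integrable.mono ((integrable_const 1).add hmom)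
      ((hYmeas 0).aestronglyMeasurable) (ae_of_all _ fun ω => ?_)
    simp only [Pi.add_apply, Real.norm_eq_abs, abs_of_nonneg (norm_nonneg _), hY]
    rw [abs_of_nonneg (by positivity : (0:ℝ) ≤ 1 + ‖X 0 ω‖ ^ 3)]
    nlinarith [mul_nonneg (norm_nonneg (X 0 ω)) (sq_nonneg (‖X 0 ω‖ - 1)),
      sq_nonneg (2 * ‖X 0 ω‖ - 1)]
  have hpairind : Pairwise (Function.onFun (IndepFun · · ℙ) Y) := fun i j hij =>
    (hindep.indepFun hij).comp measurable_fst.norm measurable_fst.norm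
  have hYident : ∀ i, IdentDistrib (Y i) (Y 0) ℙ ℙ := by
    intro i
    have hpair : IdentDistrib (fun ω => (X i ω, A i ω)) (fun ω => (X 0 ω, A 0 ω)) ℙ ℙ :=
      ⟨((hXmeas i).prodMk (hAmeas i)).aemeasurable,
       ((hXmeas 0).prodMk (hAmeas 0)).aemeasurable, hident i⟩
    exact hpair.comp measurable_fst.norm
  set μ0 : ℝ := ∫ ω', ‖X 0 ω'‖ ∂ℙ with hμ0def
  set C : ℝ := μ0 + 1 with hCdef
  have hμ0 : 0 ≤ μ0 := integral_nonneg fun ω => norm_nonneg _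
  have hC0 : 0 ≤ C := by rw [hCdef]; linarith
  have hSLLN : ∀ᵐ ω ∂ℙ, Tendsto (fun n : ℕ => (∑ i ∈ Finset.range n, Y i ω) / n)
      atTop (nhds μ0) := strong_law_ae_real Y hYint hpairind hYident
  have hTIM : TendstoInMeasure ℙ (fun n ω => (∑ i ∈ Finset.range n, Y i ω) / n) atTop
      (fun _ => μ0) :=
    tendstoInMeasure_of_tendsto_ae
      (fun n => ((Finset.measurable_sum (Finset.range n) fun i _ => hYmeas i).div_const
        n).aestronglyMeasurable) hSLLN
  have hB1 : Tendsto (fun n : ℕ => ℙ {ω | C * n < ∑ i ∈ Finset.range n, Y i ω})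
      atTop (nhds 0) := by
    have h1 := hTIM 1 one_pos
    apply tendsto_of_tendsto_of_tendsto_of_le_of_le' tendsto_const_nhds h1
    · exact Eventually.of_forall fun n => zero_le
    · filter_upwards [eventually_ge_atTop 1] with n hn
      apply measure_mono
      intro ω hω
      simp only [Set.mem_setOf_eq] at hω ⊢
      have hn0 : (0:ℝ) < n := by exact_mod_cast hn
      have hlt : C < (∑ i ∈ Finset.range n, Y i ω) / n := by
        rw [lt_div_iff₀ hn0]; linarith [hω]
      have hlt' : μ0 + 1 < (∑ i ∈ Finset.range n, Y i ω) / n := hCdef.symm.trans_lt hlt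
      rw [edist_dist, ENNReal.one_le_ofReal, Real.dist_eq, abs_of_nonneg (by linarith)]
      linarith
  -- lam2 eventually below sqrt n
  have hev1 : ∀ᶠ n : ℕ in atTop, lam2 n ≤ Real.sqrt n := by
    have h := hlam2.eventually (gt_mem_nhds (by norm_num : (0:ℝ) < 1))
    filter_upwards [h, eventually_ge_atTop 1] with n h1 h2
    have hn0 : (0:ℝ) < n := by exact_mod_cast h2
    have hsq : (0:ℝ) < Real.sqrt n := Real.sqrt_pos.2 hn0
    have := (div_lt_one hsq).1 h1
    linarith
  -- the key eventual bound
  have key : ∀ r : ℝ, 0 < r → ∀ᶠ n : ℕ in atTop, ℙ ((T n)ᶜ) ≤ ENNReal.ofReal r := by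
    intro r hr
    set J : Finset (Fin p) := Finset.univ.filter (fun j => p₀ ≤ (j : ℕ)) with hJ
    set K : ℕ := 2 * J.card + 1 with hK
    have hKpos : (0:ℝ) < K := by positivity
    have hrK2 : 0 < r / (2 * K) := by positivity
    have hrK : 0 < r / K := by positivity
    choose Mf hMf using fun (j : Fin p) (hj : p₀ ≤ (j : ℕ)) => hβbound j hj (r / (2 * K)) hrK2
    set Mv : Fin p → ℝ := fun j => if h : p₀ ≤ (j : ℕ) then Mf j h else 0 with hMv
    set M : ℝ := 1 + ∑ j ∈ J, |Mv j| with hMdef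
    have hM1 : (1:ℝ) ≤ M := by
      rw [hMdef]
      have : (0:ℝ) ≤ ∑ j ∈ J, |Mv j| := Finset.sum_nonneg fun j _ => abs_nonneg _
      linarith
    have hMpos : 0 < M := lt_of_lt_of_le one_pos hM1
    have hMge : ∀ j : Fin p, p₀ ≤ (j : ℕ) → Mv j ≤ M := by
      intro j hj
      have hjJ : j ∈ J := by simp [hJ, hj]
      have h1 : |Mv j| ≤ ∑ k ∈ J, |Mv k| :=
        Finset.single_le_sum (f := fun k => |Mv k|) (fun k _ => abs_nonneg _) hjJ
      rw [hMdef]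
      linarith [le_abs_self (Mv j)]
    have hcpos : (0:ℝ≥0∞) < ENNReal.ofReal (r / K) := ENNReal.ofReal_pos.2 hrK
    -- eventual smallness of each bad set
    have hevB1 : ∀ᶠ n : ℕ in atTop,
        ℙ {ω | C * n < ∑ i ∈ Finset.range n, Y i ω} ≤ ENNReal.ofReal (r / K) :=
      (hB1.eventually (Iio_mem_nhds hcpos)).mono fun n h => le_of_lt h
    have hevB2 : ∀ᶠ n : ℕ in atTop, ∀ j ∈ J,
        ℙ {ω | Mv j < Real.sqrt n * |βhat n ω j|} ≤ ENNReal.ofReal (r / K) := by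
      rw [eventually_all_finset]
      intro j hjJ
      have hj : p₀ ≤ (j : ℕ) := by simpa [hJ] using hjJ
      have hls := hMf j hj
      have heq : (fun n : ℕ => ℙ {ω | Mv j < Real.sqrt n * |βhat n ω j|})
          = fun n : ℕ => ℙ {ω | Mf j hj < Real.sqrt n * |βhat n ω j|} := by
        funext n; congr 1; ext ω; rw [hMv]; simp [dif_pos hj]
      have hlt : limsup (fun n : ℕ => ℙ {ω | Mv j < Real.sqrt n * |βhat n ω j|}) atTop
          < ENNReal.ofReal (r / K) := by
        rw [heq]
        refine lt_of_le_of_lt hls ?_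
        rw [ENNReal.ofReal_lt_ofReal_iff hrK]
        exact div_lt_div_of_pos_left hr (by exact_mod_cast hKpos) (by nlinarith)
      exact (eventually_lt_of_limsup_lt hlt).mono fun n h => le_of_lt h
    have hevB3 : ∀ᶠ n : ℕ in atTop, ∀ j ∈ J,
        ℙ {ω | βhat n ω j = 0} ≤ ENNReal.ofReal (r / K) := by
      rw [eventually_all_finset]
      intro j hjJ
      have hj : p₀ ≤ (j : ℕ) := by simpa [hJ] using hjJ
      exact ((hβzero j hj).eventually (Iio_mem_nhds hcpos)).mono fun n h => le_of_lt h
    have hev2 : ∀ᶠ n : ℕ in atTop, (C + 2) * M ^ γ < lam1 n * (n:ℝ) ^ (γ / 2 - 1) :=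
      hlam1b.eventually_gt_atTop _
    filter_upwards [hevB1, hevB2, hevB3, hev1, hev2, eventually_ge_atTop 1] with n
      hn1 hn2 hn3 hn4 hn5 hn6
    -- inclusion in the union of bad sets
    have hincl : (T n)ᶜ ⊆ {ω | C * n < ∑ i ∈ Finset.range n, Y i ω}
        ∪ ⋃ j ∈ J, ({ω | Mv j < Real.sqrt n * |βhat n ω j|} ∪ {ω | βhat n ω j = 0}) := by
      intro ω hω
      by_contra hbad
      simp only [Set.mem_union, Set.mem_iUnion, Set.mem_setOf_eq, not_or, not_exists] at hbad
      obtain ⟨hbad1, hbad2⟩ := hbad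
      apply hω
      intro j hj
      have hjJ : j ∈ J := by simp [hJ, hj]
      have hb2 := hbad2 j hjJ
      exact detSelect n hn6 (fun i => X i ω) (fun i => A i ω) (fun i => hA01 i ω)
        (βhat n ω) γ (lam1 n) (lam2 n) (by linarith) (hlam1nn n) (hlam2nn n)
        (αhat n ω) (hαmin n ω) C M hC0 hMpos (le_of_not_gt hbad1) hn4
        hn5 j hb2.2
        (le_trans (le_of_not_gt hb2.1) (hMge j hj))
    calc ℙ ((T n)ᶜ) ≤ ℙ ({ω | C * n < ∑ i ∈ Finset.range n, Y i ω}
        ∪ ⋃ j ∈ J, ({ω | Mv j < Real.sqrt n * |βhat n ω j|} ∪ {ω | βhat n ω j = 0})) :=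
          measure_mono hincl
      _ ≤ ℙ {ω | C * n < ∑ i ∈ Finset.range n, Y i ω}
          + ℙ (⋃ j ∈ J, ({ω | Mv j < Real.sqrt n * |βhat n ω j|} ∪ {ω | βhat n ω j = 0})) :=
          measure_union_le _ _
      _ ≤ ENNReal.ofReal (r / K) + ∑ j ∈ J,
            (ENNReal.ofReal (r / K) + ENNReal.ofReal (r / K)) := by
          refine add_le_add hn1 ?_
          refine le_trans (measure_biUnion_finset_le J _) (Finset.sum_le_sum fun j hj => ?_)
          exact le_trans (measure_union_le _ _) (add_le_add (hn2 j hj) (hn3 j hj))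
      _ = (K : ℝ≥0∞) * ENNReal.ofReal (r / K) := by
          rw [Finset.sum_const, hK]
          push_cast
          ring
      _ = ENNReal.ofReal r := by
          rw [← ENNReal.ofReal_natCast K, ← ENNReal.ofReal_mul (by positivity)]
          congr 1
          field_simp
  -- conclude
  have hcompl : Tendsto (fun n : ℕ => ℙ ((T n)ᶜ)) atTop (nhds 0) := by
    rw [ENNReal.tendsto_atTop_zero]
    intro ε hε
    rcases eq_or_ne ε ⊤ with hεt | hεt
    · exact ⟨0, fun n _ => hεt ▸ le_top⟩
    · have hr : 0 < ε.toReal := ENNReal.toReal_pos (ne_of_gt hε) hεt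
      obtain ⟨N, hN⟩ := eventually_atTop.1 (key ε.toReal hr)
      exact ⟨N, fun n hn => (hN n hn).trans_eq (ENNReal.ofReal_toReal hεt)⟩
  have hps : ∀ n, ℙ (T n) = 1 - ℙ ((T n)ᶜ) := by
    intro n
    rw [← compl_compl (T n)] at *
    rw [prob_compl_eq_one_sub (hTmeas n).compl, compl_compl]
  have : Tendsto (fun n : ℕ => (1:ℝ≥0∞) - ℙ ((T n)ᶜ)) atTop (nhds 1) := by
    have hcont := (ENNReal.continuous_sub_left (a := 1) ENNReal.one_ne_top).continuousAt
      (x := (0:ℝ≥0∞))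
    have := hcont.tendsto.comp hcompl
    simpa [Function.comp_def] using this
  show Tendsto (fun n => ℙ (T n)) atTop (nhds 1)
  simpa only [hps] using this
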